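/- Example 2.2 (i): Let X = [0,1], m = 2, f_0(x) = x²/2 and f_1(x) = (x + 1)/2, and let G be the unique continuous solution of de Rham's equation. Then α = ∫₀¹ −log_2 |f′_{A_1(t)}(G(Ht))| dt = +∞ (in particular α > 1), and consequently G′(t) = 0 for Lebesgue-a.e. t ∈ (0,1). -/

import Mathlib

open MeasureTheory Filter Set Topology
open scoped ENNReal

noncomputable section

/-- The first digit `A₁(t) = ⌊m t⌋` of the `m`-adic expansion of `t ∈ [0,1)`. -/
def A1 (m : ℕ) (t : ℝ) : ℕ := (⌊(m : ℝ) * t⌋).toNat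

/-- The shift map `Ht = m t - ⌊m t⌋` on `[0,1)`. -/
def Hmap (m : ℕ) (t : ℝ) : ℝ := (m : ℝ) * t - ⌊(m : ℝ) * t⌋

/-- `-log_m x` as a value in `[0,∞]`, with the convention `-log_m 0 = +∞`. -/
def negLogbE (m : ℕ) (x : ℝ) : ℝ≥0∞ :=
  if x = 0 then ⊤ else ENNReal.ofReal (-Real.logb m x)

/-- The maps `f₀(x) = x²/2` and `f₁(x) = (x+1)/2` of Example 2.2 (i). -/
def fEx (i : ℕ) (x : ℝ) : ℝ := if i = 0 then x ^ 2 / 2 else (x + 1) / 2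

/-- `α = ∫₀¹ -log₂ |f'_{A₁(t)}(G(Ht))| dt ∈ [0,∞]`, with the convention `-log₂ 0 = +∞`. -/
def alphaEx (G : ℝ → ℝ) : ℝ≥0∞ :=
  ∫⁻ t in Set.Ico (0 : ℝ) 1, negLogbE 2 |deriv (fEx (A1 2 t)) (G (Hmap 2 t))|

end

section AuxDR

variable {G : ℝ → ℝ}

/-- Claim P: on dyadic intervals, G is between its endpoint values. -/
lemma dr_claimP (hX : ∀ t : ℝ, 0 ≤ t → t ≤ 1 → 0 ≤ G t ∧ G t ≤ 1)
    (hL : ∀ t : ℝ, 0 ≤ t → t ≤ 1/2 → G t = (G (2*t))^2/2)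
    (hR : ∀ t : ℝ, 1/2 ≤ t → t ≤ 1 → G t = (G (2*t-1)+1)/2)
    (hG0 : G 0 = 0) (hG1 : G 1 = 1) :
    ∀ n k : ℕ, k < 2^n → ∀ t : ℝ, (k:ℝ)/2^n ≤ t → t ≤ ((k:ℝ)+1)/2^n →
      G ((k:ℝ)/2^n) ≤ G t ∧ G t ≤ G (((k:ℝ)+1)/2^n) := by
  intro n
  induction n with
  | zero =>
    intro k hk t h1 h2
    interval_cases k
    simp only [Nat.cast_zero, pow_zero, zero_div, div_one] at h1 h2 ⊢
    have hX' := hX t h1 (by linarith)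
    constructor
    · rw [hG0]; exact hX'.1
    · norm_num; rw [hG1]; exact hX'.2
  | succ n IH =>
    intro k hk t h1 h2
    have h2n : (0:ℝ) < 2^n := by positivity
    have h2n1 : (0:ℝ) < 2^(n+1) := by positivity
    have hps : (2:ℝ)^(n+1) = 2^n * 2 := by rw [pow_succ]
    rcases le_or_gt (k+1) (2^n) with hk2 | hk2
    · -- left half
      have hkr : ((k:ℝ)+1) ≤ 2^n := by
        have := (Nat.cast_le (α := ℝ)).2 hk2
        push_cast at this; linarith
      have ht0 : 0 ≤ t := le_trans (by positivity) h1
      have ht12 : t ≤ 1/2 := by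
        calc t ≤ ((k:ℝ)+1)/2^(n+1) := h2
        _ ≤ (2^n : ℝ)/2^(n+1) := by gcongr
        _ = 1/2 := by rw [hps]; field_simp
      have e0 : 2 * ((k:ℝ)/2^(n+1)) = (k:ℝ)/2^n := by rw [hps]; ring
      have e1 : 2 * (((k:ℝ)+1)/2^(n+1)) = ((k:ℝ)+1)/2^n := by rw [hps]; ring
      have hta : (k:ℝ)/2^n ≤ 2*t := by
        rw [← e0]; linarith
      have htb : 2*t ≤ ((k:ℝ)+1)/2^n := by
        rw [← e1]; linarith
      have hIH := IH k (by omega) (2*t) hta htb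
      have hGt : G t = (G (2*t))^2/2 := hL t ht0 ht12
      have hGa : G ((k:ℝ)/2^(n+1)) = (G ((k:ℝ)/2^n))^2/2 := by
        rw [hL ((k:ℝ)/2^(n+1)) (by positivity) (by linarith [le_trans h1 ht12]), e0]
      have hGb : G (((k:ℝ)+1)/2^(n+1)) = (G (((k:ℝ)+1)/2^n))^2/2 := by
        have hble : ((k:ℝ)+1)/2^(n+1) ≤ 1/2 := by
          calc ((k:ℝ)+1)/2^(n+1) ≤ (2^n : ℝ)/2^(n+1) := by gcongr
          _ = 1/2 := by rw [hps]; field_simp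
        rw [hL (((k:ℝ)+1)/2^(n+1)) (by positivity) hble, e1]
      have ha0 : 0 ≤ G ((k:ℝ)/2^n) := by
        refine (hX _ (by positivity) ?_).1
        rw [div_le_one h2n]
        have : (k:ℝ) + 1 ≤ 2^n := hkr
        linarith
      rw [hGt, hGa, hGb]
      constructor
      · nlinarith [hIH.1, hIH.2]
      · nlinarith [hIH.1, hIH.2]
    · -- right half
      have hk2' : 2^n ≤ k := by omega
      have hkr : (2^n : ℝ) ≤ (k:ℝ) := by exact_mod_cast hk2'
      have hkr2 : (k:ℝ) + 1 ≤ 2^(n+1) := by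
        have : k + 1 ≤ 2^(n+1) := hk
        exact_mod_cast this
      have ht12 : 1/2 ≤ t := by
        calc (1:ℝ)/2 = (2^n : ℝ)/2^(n+1) := by rw [hps]; field_simp
        _ ≤ (k:ℝ)/2^(n+1) := by gcongr
        _ ≤ t := h1
      have ht1 : t ≤ 1 := by
        calc t ≤ ((k:ℝ)+1)/2^(n+1) := h2
        _ ≤ (2^(n+1) : ℝ)/2^(n+1) := by gcongr
        _ = 1 := by field_simp
      set k' : ℕ := k - 2^n with hk'
      have hkc : (k:ℝ) = (k':ℝ) + 2^n := by
        have h : k' + 2^n = k := by omega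
        have := congrArg (Nat.cast (R := ℝ)) h
        push_cast at this; linarith
      have e0 : 2 * ((k:ℝ)/2^(n+1)) - 1 = (k':ℝ)/2^n := by
        rw [hps, hkc]; field_simp; ring
      have e1 : 2 * (((k:ℝ)+1)/2^(n+1)) - 1 = ((k':ℝ)+1)/2^n := by
        rw [hps, hkc]; field_simp; ring
      have hta : (k':ℝ)/2^n ≤ 2*t - 1 := by rw [← e0]; linarith
      have htb : 2*t - 1 ≤ ((k':ℝ)+1)/2^n := by rw [← e1]; linarith
      have hIH := IH k' (by omega) (2*t-1) hta htb
      have hGt : G t = (G (2*t-1)+1)/2 := hR t ht12 ht1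
      have hGa : G ((k:ℝ)/2^(n+1)) = (G ((k':ℝ)/2^n)+1)/2 := by
        have hhalf : (1:ℝ)/2 ≤ (k:ℝ)/2^(n+1) := by
          rw [hps]
          rw [div_le_div_iff₀ (by norm_num) (by positivity)]
          nlinarith
        rw [hR ((k:ℝ)/2^(n+1)) hhalf (by linarith), e0]
      have hGb : G (((k:ℝ)+1)/2^(n+1)) = (G (((k':ℝ)+1)/2^n)+1)/2 := by
        have : 1/2 ≤ ((k:ℝ)+1)/2^(n+1) := by linarith
        have h1' : ((k:ℝ)+1)/2^(n+1) ≤ 1 := by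
          rw [div_le_one h2n1]; linarith
        rw [hR _ this h1', e1]
      rw [hGt, hGa, hGb]
      constructor
      · linarith [hIH.1]
      · linarith [hIH.2]


lemma dr_dyadicMono (hX : ∀ t : ℝ, 0 ≤ t → t ≤ 1 → 0 ≤ G t ∧ G t ≤ 1)
    (hL : ∀ t : ℝ, 0 ≤ t → t ≤ 1/2 → G t = (G (2*t))^2/2)
    (hR : ∀ t : ℝ, 1/2 ≤ t → t ≤ 1 → G t = (G (2*t-1)+1)/2)
    (hG0 : G 0 = 0) (hG1 : G 1 = 1) :
    ∀ n j k : ℕ, j ≤ k → k ≤ 2^n → G ((j:ℝ)/2^n) ≤ G ((k:ℝ)/2^n) := by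
  intro n j k
  induction k with
  | zero => intro hj _; interval_cases j; exact le_refl _
  | succ k ihk =>
    intro hj hk
    rcases Nat.eq_or_lt_of_le hj with h | h
    · rw [h]
    · have hjk : j ≤ k := by omega
      refine le_trans (ihk hjk (by omega)) ?_
      have hstep := (dr_claimP hX hL hR hG0 hG1 n k (by omega) ((k:ℝ)/2^n) (le_refl _)
        (by gcongr; linarith)).2
      have hcast : ((k:ℝ)+1) = ((k+1:ℕ):ℝ) := by push_cast; ring
      rw [hcast] at hstep
      exact hstep

lemma dr_mono (hX : ∀ t : ℝ, 0 ≤ t → t ≤ 1 → 0 ≤ G t ∧ G t ≤ 1)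
    (hL : ∀ t : ℝ, 0 ≤ t → t ≤ 1/2 → G t = (G (2*t))^2/2)
    (hR : ∀ t : ℝ, 1/2 ≤ t → t ≤ 1 → G t = (G (2*t-1)+1)/2)
    (hG0 : G 0 = 0) (hG1 : G 1 = 1) :
    MonotoneOn G (Set.Icc (0:ℝ) 1) := by
  intro x hx y hy hxy
  rcases eq_or_lt_of_le hxy with rfl | hlt
  · exact le_refl _
  obtain ⟨n, hn⟩ := pow_unbounded_of_one_lt (1/(y-x)) (by norm_num : (1:ℝ) < 2)
  have h2n : (0:ℝ) < 2^n := by positivity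
  have hyx : (1:ℝ)/2^n < y - x := by
    rw [div_lt_iff₀ h2n]
    rw [div_lt_iff₀ (by linarith : (0:ℝ) < y - x)] at hn
    linarith
  have hx0 : (0:ℝ) ≤ x := hx.1
  have hy1 : y ≤ 1 := hy.2
  have hx1 : x < 1 := lt_of_lt_of_le hlt hy1
  -- floors
  set Kz : ℤ := ⌊(2:ℝ)^n * x⌋ with hKz
  set Mz : ℤ := ⌊(2:ℝ)^n * y⌋ with hMz
  have hKz0 : 0 ≤ Kz := Int.floor_nonneg.2 (by positivity)
  have hMz0 : 0 ≤ Mz := Int.floor_nonneg.2 (by nlinarith)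
  set K : ℕ := Kz.toNat with hK
  set M : ℕ := Mz.toNat with hM
  have hKc : (K:ℝ) = Kz := by rw [hK]; exact_mod_cast Int.toNat_of_nonneg hKz0
  have hMc : (M:ℝ) = Mz := by rw [hM]; exact_mod_cast Int.toNat_of_nonneg hMz0
  have hKle : (K:ℝ) ≤ 2^n * x := by rw [hKc]; exact Int.floor_le _
  have hKgt : 2^n * x < (K:ℝ) + 1 := by rw [hKc]; exact Int.lt_floor_add_one _
  have hMle : (M:ℝ) ≤ 2^n * y := by rw [hMc]; exact Int.floor_le _
  have hMgt : 2^n * y < (M:ℝ) + 1 := by rw [hMc]; exact Int.lt_floor_add_one _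
  have hKlt : K < 2^n := by
    have h : (K:ℝ) < ((2^n : ℕ):ℝ) := by push_cast; nlinarith
    exact_mod_cast h
  have hMle2 : M ≤ 2^n := by
    have h : (M:ℝ) ≤ ((2^n : ℕ):ℝ) := by push_cast; nlinarith
    exact_mod_cast h
  have hKM : K + 1 ≤ M := by
    have h1 : (K:ℝ) + 1 < 2^n * y := by
      rw [div_lt_iff₀ h2n] at hyx; nlinarith
    have : ((K:ℤ) + 1 : ℤ) ≤ Mz := by
      rw [hMz]
      apply Int.le_floor.2
      push_cast
      push_cast at hKc
      nlinarith [hKc]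
    omega
  -- G x ≤ G ((K+1)/2^n)
  have step1 : G x ≤ G (((K:ℝ)+1)/2^n) :=
    (dr_claimP hX hL hR hG0 hG1 n K hKlt x
      (by rw [div_le_iff₀ h2n]; linarith)
      (by rw [le_div_iff₀ h2n]; linarith)).2
  have step2 : G (((K:ℝ)+1)/2^n) ≤ G ((M:ℝ)/2^n) := by
    have := dr_dyadicMono hX hL hR hG0 hG1 n (K+1) M hKM hMle2
    convert this using 3
    push_cast; ring
  have step3 : G ((M:ℝ)/2^n) ≤ G y := by
    rcases Nat.eq_or_lt_of_le hMle2 with hEq | hMlt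
    · have hMr : (M:ℝ) = 2^n := by rw [hEq]; push_cast; ring
      have hy1' : (1:ℝ) ≤ y := by nlinarith [hMle, hMr]
      have hyeq : y = 1 := le_antisymm hy1 hy1'
      have hone : (M:ℝ)/2^n = 1 := by rw [hMr]; field_simp
      rw [hone, hyeq]
    · exact (dr_claimP hX hL hR hG0 hG1 n M hMlt y
        (by rw [div_le_iff₀ h2n]; linarith)
        (by rw [le_div_iff₀ h2n]; linarith)).1
  linarith

lemma dr_Gsmall (hX : ∀ t : ℝ, 0 ≤ t → t ≤ 1 → 0 ≤ G t ∧ G t ≤ 1)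
    (hL : ∀ t : ℝ, 0 ≤ t → t ≤ 1/2 → G t = (G (2*t))^2/2) :
    ∀ n : ℕ, ∀ s : ℝ, 0 ≤ s → s ≤ 1/2^n → G s ≤ 2 / 2^(2^n) := by
  intro n
  induction n with
  | zero =>
    intro s h0 h1
    simp only [pow_zero, pow_one] at *
    have := (hX s h0 (by linarith)).2
    linarith
  | succ n IH =>
    intro s h0 h1
    have h2n : (0:ℝ) < 2^n := by positivity
    have hs12 : s ≤ 1/2 := by
      calc s ≤ 1/2^(n+1) := h1
      _ ≤ 1/2 := by
        apply div_le_div_of_nonneg_left (by norm_num) (by norm_num)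
        calc (2:ℝ) = 2^1 := (pow_one 2).symm
        _ ≤ 2^(n+1) := by apply pow_le_pow_right₀ (by norm_num); omega
    have h2s : 2*s ≤ 1/2^n := by
      rw [pow_succ] at h1
      have h1' : s * (2^n*2) ≤ 1 := (le_div_iff₀ (by positivity)).1 h1
      rw [le_div_iff₀ h2n]
      nlinarith
    have hIH := IH (2*s) (by linarith) h2s
    have h2s0 : 0 ≤ G (2*s) := (hX (2*s) (by linarith) (by
      calc 2*s ≤ 1/2^n := h2s
      _ ≤ 1 := by rw [div_le_one h2n]; exact one_le_pow₀ (by norm_num))).1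
    have hGs : G s = (G (2*s))^2/2 := hL s h0 hs12
    rw [hGs]
    have hsq : (G (2*s))^2 ≤ (2 / 2^(2^n))^2 := by nlinarith
    have hpp : ((2:ℝ)^(2^n))^2 = 2^(2^(n+1)) := by
      rw [← pow_mul, pow_succ]
    have hform : ((2:ℝ) / 2^(2^n))^2 = 4 / 2^(2^(n+1)) := by
      rw [div_pow, hpp]; norm_num
    rw [hform] at hsq
    have h4 : (4:ℝ)/2^(2^(n+1)) = 2*(2/2^(2^(n+1))) := by ring
    linarith


set_option maxHeartbeats 1000000 in
/-- The key contraction inequality: on a level-`m` dyadic interval with even index,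
the increment of `G` over the left half is at most a quarter of the total increment. -/
lemma dr_star (hX : ∀ t : ℝ, 0 ≤ t → t ≤ 1 → 0 ≤ G t ∧ G t ≤ 1)
    (hL : ∀ t : ℝ, 0 ≤ t → t ≤ 1/2 → G t = (G (2*t))^2/2)
    (hR : ∀ t : ℝ, 1/2 ≤ t → t ≤ 1 → G t = (G (2*t-1)+1)/2)
    (hG0 : G 0 = 0) (hG1 : G 1 = 1) :
    ∀ m k : ℕ, 1 ≤ m → k % 2 = 0 → k < 2^m →
      G ((k:ℝ)/2^m + 1/2^(m+1)) - G ((k:ℝ)/2^m) ≤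
        (1/4) * (G (((k:ℝ)+1)/2^m) - G ((k:ℝ)/2^m)) := by
  have hmono := dr_mono hX hL hR hG0 hG1
  intro m
  induction m with
  | zero => intro k h; omega
  | succ m IH =>
    intro k hm hkeven hk
    rcases Nat.eq_zero_or_pos m with rfl | hm1
    · -- base case m+1 = 1, k = 0
      have hk0 : k = 0 := by omega
      subst hk0
      have hG12 : G (1/2 : ℝ) = 1/2 := by
        have := hL (1/2) (by norm_num) (by norm_num)
        norm_num at this
        rw [this, hG1]; norm_num
      have hG14 : G (1/4 : ℝ) = 1/8 := by
        have := hL (1/4) (by norm_num) (by norm_num)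
        norm_num at this
        rw [this, hG12]; norm_num
      norm_num
      rw [hG0, hG12, hG14]
      norm_num
    · -- inductive step, m ≥ 1
      have h2m : (0:ℝ) < 2^m := by positivity
      have h2m1 : (0:ℝ) < 2^(m+1) := by positivity
      have h2m2 : (0:ℝ) < 2^(m+2) := by positivity
      have hps : (2:ℝ)^(m+1) = 2^m * 2 := by rw [pow_succ]
      have hps2 : (2:ℝ)^(m+2) = 2^m * 4 := by rw [pow_succ, pow_succ]; ring
      have hq1 : (0:ℝ) < 1/2^(m+1) := by positivity
      have hq2 : (0:ℝ) < 1/2^(m+2) := by positivity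
      have h21 : (1:ℝ)/2^(m+1) ≤ 1/2^m := one_div_le_one_div_of_le h2m (by rw [hps]; nlinarith)
      have h22 : (1:ℝ)/2^(m+2) ≤ 1/2^(m+1) := one_div_le_one_div_of_le h2m1 (by rw [hps2, hps]; nlinarith)
      rcases le_or_gt 
        (k+1) (2^m) with hk2 | hk2
      · -- left half
        have hkr : ((k:ℝ)+1) ≤ 2^m := by exact_mod_cast hk2
        have hk0 : (0:ℝ) ≤ (k:ℝ) := by positivity
        -- the three points
        set p0 : ℝ := (k:ℝ)/2^(m+1) with hp0
        set p1 : ℝ := (k:ℝ)/2^(m+1) + 1/2^(m+2) with hp1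
        set p2 : ℝ := ((k:ℝ)+1)/2^(m+1) with hp2
        clear_value p0 p1 p2
        have e0 : 2 * p0 = (k:ℝ)/2^m := by rw [hp0, hps]; ring
        have e1 : 2 * p1 = (k:ℝ)/2^m + 1/2^(m+1) := by rw [hp1, hps, hps2]; field_simp; ring
        have e2 : 2 * p2 = ((k:ℝ)+1)/2^m := by rw [hp2, hps]; ring
        have hp2half : p2 ≤ 1/2 := by
          rw [hp2, hps, div_le_div_iff₀ (by positivity) (by norm_num)]
          nlinarith
        have hp01 : p0 ≤ p1 := by rw [hp0, hp1]; linarith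
        have hsplit1 : ((k:ℝ)+1)/2^(m+1) = (k:ℝ)/2^(m+1) + 1/2^(m+1) := by ring
        have hp12 : p1 ≤ p2 := by rw [hp1, hp2, hsplit1]; linarith
        have hGp0 : G p0 = (G ((k:ℝ)/2^m))^2/2 := by
          rw [hL p0 (by rw [hp0]; positivity) (le_trans hp01 (le_trans hp12 hp2half)), e0]
        have hGp1 : G p1 = (G ((k:ℝ)/2^m + 1/2^(m+1)))^2/2 := by
          rw [hL p1 (le_trans (by rw [hp0]; positivity) hp01) (le_trans hp12 hp2half), e1]
        have hGp2 : G p2 = (G (((k:ℝ)+1)/2^m))^2/2 := by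
          rw [hL p2 (by rw [hp2]; positivity) hp2half, e2]
        have hIH := IH k hm1 hkeven (by omega)
        -- abbreviations
        set u := G ((k:ℝ)/2^m) with hu
        set v := G ((k:ℝ)/2^m + 1/2^(m+1)) with hv
        set w := G (((k:ℝ)+1)/2^m) with hw
        clear_value u v w
        have hin0 : (k:ℝ)/2^m ∈ Set.Icc (0:ℝ) 1 := by
          constructor
          · positivity
          · rw [div_le_one h2m]; linarith
        have hin2 : ((k:ℝ)+1)/2^m ∈ Set.Icc (0:ℝ) 1 := by
          constructor
          · positivity
          · rw [div_le_one h2m]; linarith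
        have hsplit : ((k:ℝ)+1)/2^m = (k:ℝ)/2^m + 1/2^m := by ring
        have hin1 : (k:ℝ)/2^m + 1/2^(m+1) ∈ Set.Icc (0:ℝ) 1 := by
          constructor
          · positivity
          · refine le_trans ?_ hin2.2
            rw [hsplit]; linarith
        have huv : u ≤ v := by rw [hu, hv]; exact hmono hin0 hin1 (by linarith)
        have hvw : v ≤ w := by rw [hv, hw]; exact hmono hin1 hin2 (by rw [hsplit]; linarith)
        have hu0 : 0 ≤ u := by rw [hu]; exact (hX _ hin0.1 hin0.2).1
        have key1 : (v-u)*(v+u) ≤ ((1/4)*(w-u))*(v+u) :=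
          mul_le_mul_of_nonneg_right hIH (by linarith)
        have key2 : ((1/4)*(w-u))*(v+u) ≤ ((1/4)*(w-u))*(w+u) :=
          mul_le_mul_of_nonneg_left (by linarith) (by linarith)
        have key : v^2 - u^2 ≤ (1/4)*(w^2 - u^2) := by nlinarith [key1, key2]
        rw [hGp0, hGp1, hGp2]
        linarith [key]
      · -- right half
        have hk2' : 2^m ≤ k := by omega
        have hkr : (2^m : ℝ) ≤ (k:ℝ) := by exact_mod_cast hk2'
        have hkr2 : (k:ℝ) + 1 ≤ 2^(m+1) := by exact_mod_cast hk
        set k' : ℕ := k - 2^m with hk'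
        have hkc : (k:ℝ) = (k':ℝ) + 2^m := by
          have h : k' + 2^m = k := by omega
          have := congrArg (Nat.cast (R := ℝ)) h
          push_cast at this; linarith
        have hk'even : k' % 2 = 0 := by
          have : 2^m % 2 = 0 := by
            have : (2:ℕ) ∣ 2^m := dvd_pow_self 2 (by omega)
            omega
          omega
        set p0 : ℝ := (k:ℝ)/2^(m+1) with hp0
        set p1 : ℝ := (k:ℝ)/2^(m+1) + 1/2^(m+2) with hp1
        set p2 : ℝ := ((k:ℝ)+1)/2^(m+1) with hp2
        clear_value p0 p1 p2
        have e0 : 2 * p0 - 1 = (k':ℝ)/2^m := by rw [hp0, hps, hkc]; field_simp; ring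
        have e1 : 2 * p1 - 1 = (k':ℝ)/2^m + 1/2^(m+1) := by
          rw [hp1, hps, hps2, hkc]; field_simp; ring
        have e2 : 2 * p2 - 1 = ((k':ℝ)+1)/2^m := by rw [hp2, hps, hkc]; field_simp; ring
        have hphalf : 1/2 ≤ p0 := by
          rw [hp0, hps, div_le_div_iff₀ (by norm_num) (by positivity)]
          nlinarith
        have hp2le : p2 ≤ 1 := by
          rw [hp2, div_le_one h2m1]; linarith
        have hp01 : p0 ≤ p1 := by rw [hp0, hp1]; linarith
        have hsplit1 : ((k:ℝ)+1)/2^(m+1) = (k:ℝ)/2^(m+1) + 1/2^(m+1) := by ring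
        have hp12 : p1 ≤ p2 := by rw [hp1, hp2, hsplit1]; linarith
        have hGp0 : G p0 = (G ((k':ℝ)/2^m) + 1)/2 := by
          rw [hR p0 hphalf (le_trans hp01 (le_trans hp12 hp2le)), e0]
        have hGp1 : G p1 = (G ((k':ℝ)/2^m + 1/2^(m+1)) + 1)/2 := by
          rw [hR p1 (le_trans hphalf hp01) (le_trans hp12 hp2le), e1]
        have hGp2 : G p2 = (G (((k':ℝ)+1)/2^m) + 1)/2 := by
          rw [hR p2 (le_trans hphalf (le_trans hp01 hp12)) hp2le, e2]
        have hIH := IH k' hm1 hk'even (by omega)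
        rw [hGp0, hGp1, hGp2]
        linarith


end AuxDR

/-- Points whose binary tails avoid `fract (2^m t) < 1/4` from position `N` on. -/
def drBad (N : ℕ) : Set ℝ := {t | ∀ m, N ≤ m → 1/4 ≤ Int.fract ((2:ℝ)^m * t)}

lemma drBad_key : ∀ (N j L k : ℕ), N ≤ L →
    volume (drBad N ∩ Set.Ico ((k:ℝ)/2^L) (((k:ℝ)+1)/2^L)) ≤
      ENNReal.ofReal ((3/4)^j * (1/2^L)) := by
  intro N j
  induction j with
  | zero =>
    intro L k hNL
    calc volume (drBad N ∩ Set.Ico ((k:ℝ)/2^L) (((k:ℝ)+1)/2^L))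
        ≤ volume (Set.Ico ((k:ℝ)/2^L) (((k:ℝ)+1)/2^L)) := measure_mono Set.inter_subset_right
      _ = ENNReal.ofReal (((k:ℝ)+1)/2^L - (k:ℝ)/2^L) := Real.volume_Ico
      _ = ENNReal.ofReal ((3/4)^0 * (1/2^L)) := by rw [pow_zero, one_mul]; congr 1; ring
  | succ j IHj =>
    intro L k hNL
    have h2L : (0:ℝ) < 2^L := by positivity
    have hps : (2:ℝ)^(L+2) = 2^L*4 := by rw [pow_succ, pow_succ]; ring
    set c : ℝ := (k:ℝ)/2^L with hc
    set δ : ℝ := 1/2^(L+2) with hδ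
    have hδpos : 0 < δ := by rw [hδ]; positivity
    have hq : ∀ i : ℕ, i ≤ 4 → ((4*k+i : ℕ):ℝ)/2^(L+2) = c + i*δ := by
      intro i _
      rw [hc, hδ, hps]
      push_cast
      field_simp
    have hc4 : c + 4*δ = ((k:ℝ)+1)/2^L := by
      rw [hc, hδ, hps]; field_simp
    have hsub : drBad N ∩ Set.Ico c (((k:ℝ)+1)/2^L) ⊆
        (drBad N ∩ Set.Ico (c+δ) (c+2*δ)) ∪
        ((drBad N ∩ Set.Ico (c+2*δ) (c+3*δ)) ∪
         (drBad N ∩ Set.Ico (c+3*δ) (c+4*δ))) := by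
      rintro t ⟨htB, ht1, ht2⟩
      rw [← hc4] at ht2
      have hnotQ0 : ¬ t < c + δ := by
        intro hlt
        have hfl : ⌊(2:ℝ)^L * t⌋ = (k:ℤ) := by
          rw [Int.floor_eq_iff]
          constructor
          · push_cast
            calc ((k:ℝ)) = 2^L * c := by rw [hc]; field_simp
            _ ≤ 2^L * t := by nlinarith
          · push_cast
            have : 2^L * t < 2^L * (c + δ) := by nlinarith
            have hce : 2^L * (c + δ) = (k:ℝ) + 1/4 := by
              rw [hc, hδ, hps]; field_simp
            rw [hce] at this
            linarith
        have hfr : Int.fract ((2:ℝ)^L * t) < 1/4 := by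
          rw [Int.fract, hfl]
          push_cast
          have : 2^L * t < 2^L * (c + δ) := by nlinarith
          have hce : 2^L * (c + δ) = (k:ℝ) + 1/4 := by
            rw [hc, hδ, hps]; field_simp
          rw [hce] at this
          linarith
        exact absurd (htB L hNL) (by linarith)
      push_neg at hnotQ0
      rcases lt_or_ge t (c+2*δ) with h2 | h2
      · exact Or.inl ⟨htB, hnotQ0, h2⟩
      rcases lt_or_ge t (c+3*δ) with h3 | h3
      · exact Or.inr (Or.inl ⟨htB, h2, h3⟩)
      · exact Or.inr (Or.inr ⟨htB, h3, ht2⟩)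
    have hone : ∀ i : ℕ, 1 ≤ i → i ≤ 3 →
        volume (drBad N ∩ Set.Ico (c+(i:ℝ)*δ) (c+((i:ℝ)+1)*δ)) ≤
          ENNReal.ofReal ((3/4)^j * (1/2^(L+2))) := by
      intro i hi1 hi3
      have h1 := hq i (by omega)
      have h2 := hq (i+1) (by omega)
      have e1 : (((4*k+i : ℕ)):ℝ)/2^(L+2) = c + i*δ := h1
      have e2 : ((((4*k+i : ℕ)):ℝ)+1)/2^(L+2) = c + ((i:ℝ)+1)*δ := by
        push_cast at h2 ⊢
        have hnum : (4*(k:ℝ) + ((i:ℝ)+1)) = (4*(k:ℝ) + (i:ℝ) + 1) := by ring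
        rw [hnum] at h2
        linarith
      have hIHj := IHj (L+2) (4*k+i) (by omega)
      rw [e1, e2] at hIHj
      exact hIHj
    calc volume (drBad N ∩ Set.Ico ((k:ℝ)/2^L) (((k:ℝ)+1)/2^L))
        ≤ volume ((drBad N ∩ Set.Ico (c+δ) (c+2*δ)) ∪
           ((drBad N ∩ Set.Ico (c+2*δ) (c+3*δ)) ∪
            (drBad N ∩ Set.Ico (c+3*δ) (c+4*δ)))) := measure_mono hsub
      _ ≤ volume (drBad N ∩ Set.Ico (c+δ) (c+2*δ)) +
          (volume (drBad N ∩ Set.Ico (c+2*δ) (c+3*δ)) +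
           volume (drBad N ∩ Set.Ico (c+3*δ) (c+4*δ))) :=
        le_trans (measure_union_le _ _) (by gcongr; exact measure_union_le _ _)
      _ ≤ ENNReal.ofReal ((3/4)^j * (1/2^(L+2))) +
          (ENNReal.ofReal ((3/4)^j * (1/2^(L+2))) + ENNReal.ofReal ((3/4)^j * (1/2^(L+2)))) := by
        have hA := hone 1 (by omega) (by omega)
        have hB := hone 2 (by omega) (by omega)
        have hC := hone 3 (by omega) (by omega)
        push_cast at hA hB hC
        ring_nf at hA hB hC
        gcongr <;> ring_nf <;> first
          | exact hA
          | exact hB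
          | exact hC
      _ = ENNReal.ofReal ((3/4)^(j+1) * (1/2^L)) := by
        rw [← ENNReal.ofReal_add (by positivity) (by positivity),
            ← ENNReal.ofReal_add (by positivity) (by positivity)]
        congr 1
        rw [hps, pow_succ]
        field_simp
        ring

lemma drBad_null (N : ℕ) : volume (drBad N ∩ Set.Ico (0:ℝ) 1) = 0 := by
  have hbound : ∀ j : ℕ, volume (drBad N ∩ Set.Ico (0:ℝ) 1) ≤ ENNReal.ofReal ((3/4)^j) := by
    intro j
    have h2N : (0:ℝ) < 2^N := by positivity
    have hcover : drBad N ∩ Set.Ico (0:ℝ) 1 ⊆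
        ⋃ k ∈ Finset.range (2^N), (drBad N ∩ Set.Ico ((k:ℝ)/2^N) (((k:ℝ)+1)/2^N)) := by
      rintro t ⟨htB, ht0, ht1⟩
      have hfl0 : 0 ≤ ⌊(2:ℝ)^N * t⌋ := Int.floor_nonneg.2 (by positivity)
      set K : ℕ := (⌊(2:ℝ)^N * t⌋).toNat with hK
      have hKc : (K:ℝ) = ⌊(2:ℝ)^N * t⌋ := by rw [hK]; exact_mod_cast Int.toNat_of_nonneg hfl0
      have hKle : (K:ℝ) ≤ 2^N * t := by rw [hKc]; exact Int.floor_le _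
      have hKgt : 2^N * t < (K:ℝ) + 1 := by rw [hKc]; exact Int.lt_floor_add_one _
      have hKlt : K < 2^N := by
        have h : (K:ℝ) < ((2^N : ℕ):ℝ) := by push_cast; nlinarith
        exact_mod_cast h
      refine Set.mem_biUnion (Finset.mem_range.2 hKlt) ⟨htB, ?_, ?_⟩
      · rw [div_le_iff₀ h2N]; linarith
      · rw [lt_div_iff₀ h2N]; linarith
    calc volume (drBad N ∩ Set.Ico (0:ℝ) 1)
        ≤ ∑ k ∈ Finset.range (2^N), volume (drBad N ∩ Set.Ico ((k:ℝ)/2^N) (((k:ℝ)+1)/2^N)) :=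
          le_trans (measure_mono hcover) (measure_biUnion_finset_le _ _)
      _ ≤ ∑ _k ∈ Finset.range (2^N), ENNReal.ofReal ((3/4)^j * (1/2^N)) :=
          Finset.sum_le_sum (fun k _ => drBad_key N j N k (le_refl N))
      _ = (2^N : ℕ) * ENNReal.ofReal ((3/4)^j * (1/2^N)) := by
          rw [Finset.sum_const, Finset.card_range, nsmul_eq_mul]
      _ = ENNReal.ofReal ((3/4)^j) := by
          rw [← ENNReal.ofReal_natCast (2^N), ← ENNReal.ofReal_mul (by positivity)]
          congr 1
          push_cast
          field_simp
  have htend : Filter.Tendsto (fun j : ℕ => ENNReal.ofReal ((3/4:ℝ)^j)) atTop (𝓝 0) := by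
    have h : Filter.Tendsto (fun j : ℕ => ((3:ℝ)/4)^j) atTop (𝓝 0) :=
      tendsto_pow_atTop_nhds_zero_of_lt_one (by norm_num) (by norm_num)
    have := (ENNReal.continuous_ofReal.tendsto 0).comp h
    simpa [Function.comp_def] using this
  have := ge_of_tendsto htend (Filter.Eventually.of_forall hbound)
  simpa using this

lemma dr_ae_pattern :
    ∀ᵐ t ∂(volume.restrict (Set.Ioo (0:ℝ) 1)),
      ∀ N : ℕ, ∃ m, N ≤ m ∧ Int.fract ((2:ℝ)^m * t) < 1/4 := by
  rw [ae_iff, Measure.restrict_apply' measurableSet_Ioo]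
  refine measure_mono_null ?_ (measure_iUnion_null (fun N => drBad_null N))
  · rintro t ⟨ht, htIoo⟩
    simp only [Set.mem_setOf_eq] at ht
    push_neg at ht
    obtain ⟨N, hN⟩ := ht
    refine Set.mem_iUnion.2 ⟨N, ⟨?_, ⟨le_of_lt htIoo.1, htIoo.2⟩⟩⟩
    intro m hm
    exact (hN m hm)

section Alpha

variable {G : ℝ → ℝ}

lemma dr_pointwise (hX : ∀ t : ℝ, 0 ≤ t → t ≤ 1 → 0 ≤ G t ∧ G t ≤ 1)
    (hL : ∀ t : ℝ, 0 ≤ t → t ≤ 1/2 → G t = (G (2*t))^2/2) (n : ℕ) :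
    ∀ t ∈ Set.Ico ((1:ℝ)/2^(n+3)) (1/2^(n+2)),
      ENNReal.ofReal ((2:ℝ)^(n+1) - 1) ≤ negLogbE 2 |deriv (fEx (A1 2 t)) (G (Hmap 2 t))| := by
  intro t ⟨ht1, ht2⟩
  have ht0 : 0 < t := lt_of_lt_of_le (by positivity) ht1
  have hp2 : (0:ℝ) < 2^(n+2) := by positivity
  have hps : (2:ℝ)^(n+2) = 2^(n+1)*2 := by rw [pow_succ]
  have h2t : 2*t < 1/2^(n+1) := by
    rw [lt_div_iff₀ (by positivity)]
    rw [lt_div_iff₀ hp2] at ht2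
    rw [hps] at ht2
    nlinarith
  have h1n : (1:ℝ)/2^(n+1) ≤ 1 := by
    rw [div_le_one (by positivity)]
    exact one_le_pow₀ (by norm_num)
  have h2tlt : 2*t < 1 := lt_of_lt_of_le h2t h1n
  have h2t1 : 2*t ≤ 1 := le_of_lt h2tlt
  have hA1 : A1 2 t = 0 := by
    unfold A1
    have : ⌊((2:ℕ):ℝ) * t⌋ = 0 := by
      rw [Int.floor_eq_zero_iff]
      constructor
      · push_cast; positivity
      · push_cast; linarith
    rw [this]; rfl
  have hHm : Hmap 2 t = 2*t := by
    unfold Hmap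
    push_cast
    have : ⌊(2:ℝ) * t⌋ = 0 := by
      rw [Int.floor_eq_zero_iff]
      exact ⟨by positivity, by linarith⟩
    rw [this]
    push_cast
    ring
  have hfEx0 : fEx 0 = fun x : ℝ => x^2/2 := by funext x; simp [fEx]
  have hder : deriv (fEx 0) (G (2*t)) = G (2*t) := by
    rw [hfEx0]
    have h := (hasDerivAt_pow 2 (G (2*t))).div_const 2
    have h2 : HasDerivAt (fun x : ℝ => x^2/2) (G (2*t)) (G (2*t)) := by
      simpa using h
    exact h2.deriv
  rw [hA1, hHm, hder]
  have hx := hX (2*t) (by linarith) h2t1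
  rw [abs_of_nonneg hx.1]
  rcases eq_or_lt_of_le hx.1 with heq | hpos
  · rw [negLogbE, if_pos heq.symm]; exact le_top
  · rw [negLogbE, if_neg (ne_of_gt hpos)]
    apply ENNReal.ofReal_le_ofReal
    have hc2 : ((2:ℕ):ℝ) = 2 := by norm_num
    rw [hc2]
    have hxle : G (2*t) ≤ 2/2^(2^(n+1)) := dr_Gsmall hX hL (n+1) (2*t) (by linarith) (le_of_lt h2t)
    have hlogle : Real.logb 2 (G (2*t)) ≤ Real.logb 2 (2/2^(2^(n+1))) :=
      Real.logb_le_logb_of_le (by norm_num) hpos hxle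
    have hcomp : Real.logb 2 ((2:ℝ)/2^(2^(n+1))) = 1 - 2^(n+1) := by
      rw [Real.logb_div (by norm_num) (by positivity)]
      rw [Real.logb_self_eq_one (by norm_num)]
      rw [Real.logb_pow]
      rw [Real.logb_self_eq_one (by norm_num)]
      push_cast
      ring
    rw [hcomp] at hlogle
    linarith

lemma dr_alpha_top (hX : ∀ t : ℝ, 0 ≤ t → t ≤ 1 → 0 ≤ G t ∧ G t ≤ 1)
    (hL : ∀ t : ℝ, 0 ≤ t → t ≤ 1/2 → G t = (G (2*t))^2/2) :
    alphaEx G = ⊤ := by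
  set F : ℝ → ℝ≥0∞ := fun t => negLogbE 2 |deriv (fEx (A1 2 t)) (G (Hmap 2 t))| with hF
  have hterm : ∀ n : ℕ,
      ENNReal.ofReal (1/8) ≤ ∫⁻ t in Set.Ico ((1:ℝ)/2^(n+3)) (1/2^(n+2)), F t := by
    intro n
    have h2le : (2:ℝ) ≤ 2^(n+1) := by
      calc (2:ℝ) = 2^1 := (pow_one 2).symm
      _ ≤ 2^(n+1) := by apply pow_le_pow_right₀ (by norm_num); omega
    have hvol : volume (Set.Ico ((1:ℝ)/2^(n+3)) (1/2^(n+2))) = ENNReal.ofReal (1/2^(n+3)) := by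
      rw [Real.volume_Ico]
      congr 1
      have : (2:ℝ)^(n+3) = 2^(n+2)*2 := by rw [pow_succ]
      rw [this]
      field_simp
      ring
    calc ENNReal.ofReal (1/8)
        ≤ ENNReal.ofReal ((2^(n+1) - 1) * (1/2^(n+3))) := by
          apply ENNReal.ofReal_le_ofReal
          have h8 : (2:ℝ)^(n+3) = 2^(n+1)*4 := by rw [pow_succ, pow_succ]; ring
          rw [h8, mul_one_div, le_div_iff₀ (by positivity)]
          nlinarith
      _ = ENNReal.ofReal (2^(n+1) - 1) * ENNReal.ofReal (1/2^(n+3)) :=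
          ENNReal.ofReal_mul (by nlinarith)
      _ = ENNReal.ofReal (2^(n+1) - 1) * volume (Set.Ico ((1:ℝ)/2^(n+3)) (1/2^(n+2))) := by
          rw [hvol]
      _ = ∫⁻ _t in Set.Ico ((1:ℝ)/2^(n+3)) (1/2^(n+2)), ENNReal.ofReal (2^(n+1) - 1) :=
          (setLIntegral_const _ _).symm
      _ ≤ ∫⁻ t in Set.Ico ((1:ℝ)/2^(n+3)) (1/2^(n+2)), F t :=
          setLIntegral_mono' measurableSet_Ico (dr_pointwise hX hL n)
  have hsum : ∀ N : ℕ, (N : ℝ≥0∞) * ENNReal.ofReal (1/8) ≤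
      ∫⁻ t in Set.Ico ((1:ℝ)/2^(N+2)) (1/4), F t := by
    intro N
    induction N with
    | zero => simp
    | succ N ih =>
      have hle1 : (1:ℝ)/2^(N+3) ≤ 1/2^(N+2) :=
        one_div_le_one_div_of_le (by positivity) (by apply pow_le_pow_right₀ (by norm_num); omega)
      have hle2 : (1:ℝ)/2^(N+2) ≤ 1/4 := by
        apply one_div_le_one_div_of_le (by norm_num)
        calc (4:ℝ) = 2^2 := by norm_num
        _ ≤ 2^(N+2) := by apply pow_le_pow_right₀ (by norm_num); omega
      have hsplit : Set.Ico ((1:ℝ)/2^(N+3)) (1/2^(N+2)) ∪ Set.Ico ((1:ℝ)/2^(N+2)) (1/4) =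
          Set.Ico ((1:ℝ)/2^(N+3)) (1/4) := Set.Ico_union_Ico_eq_Ico hle1 hle2
      have : ∫⁻ t in Set.Ico ((1:ℝ)/2^(N+3)) (1/4), F t =
          (∫⁻ t in Set.Ico ((1:ℝ)/2^(N+3)) (1/2^(N+2)), F t) +
          ∫⁻ t in Set.Ico ((1:ℝ)/2^(N+2)) (1/4), F t := by
        rw [← hsplit, lintegral_union measurableSet_Ico Set.Ico_disjoint_Ico_same]
      rw [this]
      have hcast : ((N+1 : ℕ) : ℝ≥0∞) = (N : ℝ≥0∞) + 1 := by push_cast; ring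
      rw [hcast, add_mul, one_mul, add_comm ((N : ℝ≥0∞) * ENNReal.ofReal (1/8))]
      exact add_le_add (hterm N) ih
  by_contra hne
  obtain ⟨n, hn⟩ := ENNReal.exists_nat_gt hne
  have hle : ((8*n : ℕ) : ℝ≥0∞) * ENNReal.ofReal (1/8) ≤ alphaEx G := by
    refine le_trans (hsum (8*n)) ?_
    unfold alphaEx
    apply lintegral_mono_set
    apply Set.Ico_subset_Ico (by positivity) (by norm_num)
  have heq : ((8*n : ℕ) : ℝ≥0∞) * ENNReal.ofReal (1/8) = (n : ℝ≥0∞) := by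
    push_cast
    rw [mul_comm (8 : ℝ≥0∞) (n : ℝ≥0∞), mul_assoc]
    have : (8 : ℝ≥0∞) * ENNReal.ofReal (1/8) = 1 := by
      rw [show (8:ℝ≥0∞) = ENNReal.ofReal 8 by simp]
      rw [← ENNReal.ofReal_mul (by norm_num)]
      norm_num
    rw [this, mul_one]
  rw [heq] at hle
  exact absurd hn (not_lt.2 hle)

end Alpha

section Deriv

variable {G : ℝ → ℝ}

set_option maxHeartbeats 2000000 in
lemma dr_deriv_zero (hX : ∀ t : ℝ, 0 ≤ t → t ≤ 1 → 0 ≤ G t ∧ G t ≤ 1)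
    (hL : ∀ t : ℝ, 0 ≤ t → t ≤ 1/2 → G t = (G (2*t))^2/2)
    (hR : ∀ t : ℝ, 1/2 ≤ t → t ≤ 1 → G t = (G (2*t-1)+1)/2)
    (hG0 : G 0 = 0) (hG1 : G 1 = 1) :
    ∀ᵐ t ∂(volume.restrict (Set.Ioo (0:ℝ) 1)),
      HasDerivWithinAt G 0 (Set.Icc (0:ℝ) 1) t := by
  have hmono := dr_mono hX hL hR hG0 hG1
  set G2 : ℝ → ℝ := fun s => G (max 0 (min 1 s)) with hG2
  have hclamp : ∀ s : ℝ, max 0 (min 1 s) ∈ Set.Icc (0:ℝ) 1 :=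
    fun s => ⟨le_max_left _ _, max_le (by norm_num) (min_le_left _ _)⟩
  have hG2mono : Monotone G2 := by
    intro a b hab
    exact hmono (hclamp a) (hclamp b) (max_le_max (le_refl 0) (min_le_min (le_refl 1) hab))
  have hEq : ∀ s ∈ Set.Icc (0:ℝ) 1, G2 s = G s := by
    intro s hs
    rw [hG2]
    simp only []
    rw [min_eq_right hs.2, max_eq_right hs.1]
  filter_upwards [dr_ae_pattern, ae_restrict_of_ae hG2mono.ae_differentiableAt,
    ae_restrict_mem measurableSet_Ioo] with t hBad hDiff htIoo
  have ht0 : 0 < t := htIoo.1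
  have ht1 : t < 1 := htIoo.2
  set c := deriv G2 t with hc
  have hd : HasDerivAt G2 c t := hDiff.hasDerivAt
  -- dyadic data
  set K : ℕ → ℕ := fun j => (⌊(2:ℝ)^j * t⌋).toNat with hK
  have hKc : ∀ j, ((K j : ℝ)) = ⌊(2:ℝ)^j * t⌋ := by
    intro j
    have h0 : 0 ≤ ⌊(2:ℝ)^j * t⌋ := Int.floor_nonneg.2 (by positivity)
    rw [hK]
    exact_mod_cast Int.toNat_of_nonneg h0
  have hKle : ∀ j, (K j : ℝ) ≤ 2^j * t := fun j => by rw [hKc j]; exact Int.floor_le _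
  have hKgt : ∀ j, 2^j * t < (K j : ℝ) + 1 := fun j => by rw [hKc j]; exact Int.lt_floor_add_one _
  have hKlt : ∀ j, K j < 2^j := by
    intro j
    have h2j : (0:ℝ) < 2^j := by positivity
    have h : (K j : ℝ) < ((2^j : ℕ):ℝ) := by push_cast; nlinarith [hKle j]
    exact_mod_cast h
  set r : ℕ → ℝ := fun j => 2^j * (G2 (((K j : ℝ)+1)/2^j) - G2 ((K j : ℝ)/2^j)) with hr
  have hat : ∀ j, (K j : ℝ)/2^j ≤ t := by
    intro j
    have h2j : (0:ℝ) < 2^j := by positivity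
    rw [div_le_iff₀ h2j]
    nlinarith [hKle j]
  have hbt : ∀ j, t < ((K j : ℝ)+1)/2^j := by
    intro j
    have h2j : (0:ℝ) < 2^j := by positivity
    rw [lt_div_iff₀ h2j]
    nlinarith [hKgt j]
  -- r j → c
  have hrt : Filter.Tendsto r atTop (𝓝 c) := by
    rw [Metric.tendsto_atTop]
    intro ε hε
    have ho := hasDerivAt_iff_isLittleO.mp hd
    have h3 : (0:ℝ) < ε/3 := by linarith
    have hev := ho.def h3
    rw [Metric.eventually_nhds_iff] at hev
    obtain ⟨δ, hδ, hδspan⟩ := hev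
    obtain ⟨Nn, hNn⟩ := pow_unbounded_of_one_lt (1/δ) (by norm_num : (1:ℝ) < 2)
    have hδN : (1:ℝ)/2^Nn < δ := by
      rw [div_lt_iff₀ (by positivity)]
      rw [div_lt_iff₀ hδ] at hNn
      nlinarith
    refine ⟨Nn, fun j hj => ?_⟩
    have h2j : (0:ℝ) < 2^j := by positivity
    have hjN : (1:ℝ)/2^j ≤ 1/2^Nn :=
      one_div_le_one_div_of_le (by positivity) (by apply pow_le_pow_right₀ (by norm_num); omega)
    have hjδ : (1:ℝ)/2^j < δ := lt_of_le_of_lt hjN hδN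
    set a : ℝ := (K j : ℝ)/2^j with ha
    set b : ℝ := ((K j : ℝ)+1)/2^j with hb
    have hba : b - a = 1/2^j := by rw [ha, hb]; field_simp; ring
    have hta : t - a ≤ 1/2^j := by
      have := hbt j
      rw [← hb] at this
      linarith [hba, this.le]
    have htb : b - t ≤ 1/2^j := by
      have := hat j
      rw [← ha] at this
      linarith [hba]
    have hEa : |G2 a - G2 t - (a - t)*c| ≤ ε/3 * |a - t| := by
      have hda : dist a t < δ := by
        rw [Real.dist_eq, abs_of_nonpos (by linarith [hat j, (le_of_lt (hbt j))])]
        have := hat j; rw [← ha] at this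
        linarith
      have := hδspan hda
      simpa [Real.norm_eq_abs, smul_eq_mul] using this
    have hEb : |G2 b - G2 t - (b - t)*c| ≤ ε/3 * |b - t| := by
      have hdb : dist b t < δ := by
        rw [Real.dist_eq, abs_of_nonneg (by linarith [(hbt j).le])]
        linarith
      have := hδspan hdb
      simpa [Real.norm_eq_abs, smul_eq_mul] using this
    have habs_a : |a - t| ≤ 1/2^j := by
      rw [abs_of_nonpos (by linarith [hat j])]
      linarith
    have habs_b : |b - t| ≤ 1/2^j := by
      rw [abs_of_nonneg (by linarith [(hbt j).le])]
      linarith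
    have hkey : |(G2 b - G2 a) - (b - a)*c| ≤ ε/3 * (2/2^j) := by
      have h1 : (G2 b - G2 a) - (b - a)*c = (G2 b - G2 t - (b - t)*c) - (G2 a - G2 t - (a - t)*c) := by ring
      rw [h1]
      calc |(G2 b - G2 t - (b - t)*c) - (G2 a - G2 t - (a - t)*c)|
          ≤ |G2 b - G2 t - (b - t)*c| + |G2 a - G2 t - (a - t)*c| := abs_sub _ _
        _ ≤ ε/3 * |b - t| + ε/3 * |a - t| := add_le_add hEb hEa
        _ ≤ ε/3 * (1/2^j) + ε/3 * (1/2^j) := by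
            apply add_le_add <;> apply mul_le_mul_of_nonneg_left <;> first
              | exact habs_b | exact habs_a | linarith
        _ = ε/3 * (2/2^j) := by ring
    have hrc : r j - c = 2^j * ((G2 b - G2 a) - (b - a)*c) := by
      rw [hr, hb, ha, hba]
      field_simp
    rw [Real.dist_eq, hrc, abs_mul, abs_of_pos h2j]
    calc 2^j * |(G2 b - G2 a) - (b - a)*c| ≤ 2^j * (ε/3 * (2/2^j)) := by
          apply mul_le_mul_of_nonneg_left hkey (le_of_lt h2j)
      _ = 2*ε/3 := by field_simp
      _ < ε := by linarith
  have hr0 : ∀ j, 0 ≤ r j := by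
    intro j
    have h2j : (0:ℝ) < 2^j := by positivity
    apply mul_nonneg (le_of_lt h2j)
    have : G2 ((K j : ℝ)/2^j) ≤ G2 (((K j : ℝ)+1)/2^j) := hG2mono (by gcongr; linarith)
    linarith
  have hcnn : 0 ≤ c := ge_of_tendsto hrt (Filter.Eventually.of_forall hr0)
  have hczero : c = 0 := by
    by_contra hc0
    have hcpos : 0 < c := lt_of_le_of_ne hcnn (Ne.symm hc0)
    rw [Metric.tendsto_atTop] at hrt
    obtain ⟨N, hN⟩ := hrt (c/4) (by linarith)
    obtain ⟨m, hmN, hfr⟩ := hBad N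
    -- digit relations
    have h2m : (0:ℝ) < 2^m := by positivity
    have hfr' : (2:ℝ)^m * t - (K m : ℝ) < 1/4 := by
      rw [Int.fract] at hfr
      rw [hKc m]
      exact_mod_cast hfr
    have hfr0 : (0:ℝ) ≤ 2^m * t - (K m : ℝ) := by linarith [hKle m]
    have hKm1 : K (m+1) = 2 * K m := by
      have hfl : ⌊(2:ℝ)^(m+1) * t⌋ = (2 * K m : ℤ) := by
        rw [Int.floor_eq_iff]
        constructor
        · push_cast
          rw [pow_succ]
          nlinarith [hKle m]
        · push_cast
          rw [pow_succ]
          nlinarith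
      have : ((K (m+1) : ℝ)) = ((2 * K m : ℕ) : ℝ) := by
        rw [hKc (m+1), hfl]; push_cast; ring
      exact_mod_cast this
    have hKm2 : K (m+2) = 2 * K (m+1) := by
      have hfl : ⌊(2:ℝ)^(m+2) * t⌋ = (4 * K m : ℤ) := by
        rw [Int.floor_eq_iff]
        constructor
        · push_cast
          rw [pow_succ, pow_succ]
          nlinarith [hKle m]
        · push_cast
          rw [pow_succ, pow_succ]
          nlinarith
      have : ((K (m+2) : ℝ)) = ((4 * K m : ℕ) : ℝ) := by
        rw [hKc (m+2), hfl]; push_cast; ring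
      have h4 : K (m+2) = 4 * K m := by exact_mod_cast this
      omega
    set M := m + 1 with hM
    set k := K M with hk
    have heven : k % 2 = 0 := by omega
    have hstar := dr_star hX hL hR hG0 hG1 M k (by omega) heven (hKlt M)
    -- points in [0,1]
    have h2M : (0:ℝ) < 2^M := by positivity
    have h2M1 : (0:ℝ) < 2^(M+1) := by positivity
    have hkM : (k:ℝ) + 1 ≤ 2^M := by
      have := hKlt M
      have h : (k:ℝ) + 1 ≤ ((2^M : ℕ):ℝ) := by exact_mod_cast this
      calc (k:ℝ) + 1 ≤ ((2^M : ℕ):ℝ) := h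
      _ = 2^M := by push_cast; ring
    have hin0 : (k:ℝ)/2^M ∈ Set.Icc (0:ℝ) 1 := ⟨by positivity, by rw [div_le_one h2M]; linarith⟩
    have hin2 : ((k:ℝ)+1)/2^M ∈ Set.Icc (0:ℝ) 1 := ⟨by positivity, by rw [div_le_one h2M]; linarith⟩
    have hps : (2:ℝ)^(M+1) = 2^M * 2 := by rw [pow_succ]
    have hmid : (k:ℝ)/2^M + 1/2^(M+1) ≤ ((k:ℝ)+1)/2^M := by
      have h21 : (1:ℝ)/2^(M+1) ≤ 1/2^M :=
        one_div_le_one_div_of_le h2M (by rw [hps]; nlinarith)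
      have hsplit : ((k:ℝ)+1)/2^M = (k:ℝ)/2^M + 1/2^M := by ring
      rw [hsplit]; linarith
    have hin1 : (k:ℝ)/2^M + 1/2^(M+1) ∈ Set.Icc (0:ℝ) 1 :=
      ⟨by positivity, le_trans hmid hin2.2⟩
    -- identify r (m+2) and r (m+1)
    have hrj : ∀ j, r j = 2^j * (G2 (((K j : ℝ)+1)/2^j) - G2 ((K j : ℝ)/2^j)) := fun j => rfl
    have hMe : (2:ℝ)^(m+2) = 2^(M+1) := by rw [hM]
    have e1 : ((K (m+2) : ℝ))/2^(m+2) = (k:ℝ)/2^M := by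
      rw [hKm2]; push_cast; rw [hMe, hps]; field_simp
    have e2 : (((K (m+2) : ℝ))+1)/2^(m+2) = (k:ℝ)/2^M + 1/2^(M+1) := by
      rw [hKm2]; push_cast; rw [hMe, hps]; field_simp
    have hram2 : r (m+2) = 2^(M+1) * (G ((k:ℝ)/2^M + 1/2^(M+1)) - G ((k:ℝ)/2^M)) := by
      rw [hrj (m+2), e1, e2, hEq _ hin1, hEq _ hin0, hMe]
    have hram1 : r (m+1) = 2^M * (G (((k:ℝ)+1)/2^M) - G ((k:ℝ)/2^M)) := by
      have hkd : K (m+1) = k := rfl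
      have h2e : (2:ℝ)^(m+1) = 2^M := by rw [hM]
      rw [hrj (m+1), hkd, h2e, hEq _ hin2, hEq _ hin0]
    have hhalf : r (m+2) ≤ r (m+1) / 2 := by
      rw [hram2, hram1]
      have hmul := mul_le_mul_of_nonneg_left hstar (by positivity : (0:ℝ) ≤ 2^(M+1))
      have hre : (2:ℝ)^(M+1) * (1/4 * (G (((k:ℝ)+1)/2^M) - G ((k:ℝ)/2^M))) =
          2^M * (G (((k:ℝ)+1)/2^M) - G ((k:ℝ)/2^M)) / 2 := by
        rw [hps]; ring
      linarith
    have hub := hN (m+1) (by omega)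
    have hlb := hN (m+2) (by omega)
    rw [Real.dist_eq, abs_lt] at hub hlb
    linarith
  rw [hczero] at hd
  exact (hd.hasDerivWithinAt).congr (fun y hy => (hEq y hy).symm)
    ((hEq t ⟨le_of_lt ht0, le_of_lt ht1⟩).symm)

end Deriv

/-- **Example 2.2 (i).** Let `f₀(x) = x²/2`, `f₁(x) = (x+1)/2` on `[0,1]` and let `G` be the
unique continuous solution of de Rham's equation with `G(0) = 0`, `G(1) = 1`. Then
`α = ∫₀¹ -log₂ |f'_{A₁(t)}(G(Ht))| dt = +∞` (in particular `α > 1`), and consequently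
`G'(t) = 0` for Lebesgue-a.e. `t ∈ (0,1)`. -/
theorem deRham_example_quadratic (G : ℝ → ℝ)
    (hGc : ContinuousOn G (Set.Icc 0 1))
    (hGX : Set.MapsTo G (Set.Icc 0 1) (Set.Icc 0 1))
    (hGeq : ∀ i : ℕ, i < 2 → ∀ t : ℝ, (i : ℝ) / 2 ≤ t → t ≤ ((i : ℝ) + 1) / 2 →
      G t = fEx i (G (2 * t - i)))
    (hG0 : G 0 = 0) (hG1 : G 1 = 1) :
    alphaEx G = ⊤ ∧
    ∀ᵐ t ∂(volume.restrict (Set.Ioo (0 : ℝ) 1)),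
      HasDerivWithinAt G 0 (Set.Icc (0 : ℝ) 1) t := by
  have hX : ∀ t : ℝ, 0 ≤ t → t ≤ 1 → 0 ≤ G t ∧ G t ≤ 1 := by
    intro t h0 h1
    have := hGX ⟨h0, h1⟩
    exact ⟨this.1, this.2⟩
  have hL : ∀ t : ℝ, 0 ≤ t → t ≤ 1/2 → G t = (G (2*t))^2/2 := by
    intro t h0 h1
    have := hGeq 0 (by norm_num) t (by norm_num; exact h0) (by norm_num; linarith)
    simpa [fEx] using this
  have hR : ∀ t : ℝ, 1/2 ≤ t → t ≤ 1 → G t = (G (2*t-1)+1)/2 := by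
    intro t h0 h1
    have := hGeq 1 (by norm_num) t (by norm_num; exact h0) (by norm_num; linarith)
    simpa [fEx] using this
  exact ⟨dr_alpha_top hX hL, dr_deriv_zero hX hL hR hG0 hG1⟩
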